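/- Let G be a finite abelian group and f : G → ℂ nonzero. With the Fourier transform f̂(ξ) = ∑_g f(g)\overline{ξ(g)} and supports S(f) = #{g : f(g) ≠ 0}, S(f̂) = #{ξ : f̂(ξ) ≠ 0}, the Donoho–Stark uncertainty principle S(f)·S(f̂) ≥ |G| holds, and equality S(f)·S(f̂) = |G| holds if and only if f is a modulated and translated multiple of the indicator function of a subgroup, i.e., f(g) = c·χ(g)·1_{g₀+H}(g) for some subgroup H ≤ G, g₀ ∈ G, character χ ∈ Ĝ, and nonzero scalar c. -/

import Mathlib

open Pointwise

open Finset Pointwise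

noncomputable def Complex.abs : AbsoluteValue ℂ ℝ where
  toFun z := ‖z‖
  map_mul' := norm_mul
  nonneg' := norm_nonneg
  eq_zero' _ := norm_eq_zero
  add_le' := norm_add_le

@[simp] theorem Complex.abs_apply' (z : ℂ) : Complex.abs z = ‖z‖ := rfl
theorem Complex.sq_abs (z : ℂ) : Complex.abs z ^ 2 = Complex.normSq z := Complex.sq_norm z
theorem Complex.normSq_eq_abs (z : ℂ) : Complex.normSq z = Complex.abs z ^ 2 :=
  Complex.normSq_eq_norm_sq z
theorem Complex.norm_eq_abs (z : ℂ) : ‖z‖ = Complex.abs z := rfl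
theorem Complex.re_le_abs (z : ℂ) : z.re ≤ Complex.abs z := Complex.re_le_norm z

section Aux

theorem ds_re_eq_abs_imp {z : ℂ} (h : z.re = Complex.abs z) : z = (Complex.abs z : ℝ) := by
  have him : z.im = 0 := by
    have h2 : z.re ^ 2 + z.im ^ 2 = Complex.abs z ^ 2 := by
      rw [Complex.sq_abs, Complex.normSq_apply]; ring
    rw [← h] at h2
    have : z.im ^ 2 = 0 := by linarith
    exact pow_eq_zero_iff (n := 2) (by norm_num) |>.1 this
  apply Complex.ext <;> simp [him, ← h]

theorem ds_align {ι : Type*} (s : Finset ι) (v : ι → ℂ)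
    (h : Complex.abs (∑ i ∈ s, v i) = ∑ i ∈ s, Complex.abs (v i)) :
    ∀ i ∈ s, v i * (Complex.abs (∑ j ∈ s, v j) : ℝ) = (Complex.abs (v i) : ℝ) * ∑ j ∈ s, v j := by
  classical
  set S := ∑ j ∈ s, v j with hS
  by_cases hS0 : S = 0
  · intro i hi; simp [hS0]
  have key : ∀ i ∈ s, (v i * (starRingEnd ℂ) S).re = Complex.abs (v i) * Complex.abs S := by
    have hsum : ∑ i ∈ s, (v i * (starRingEnd ℂ) S).re = Complex.abs S * Complex.abs S := by
      rw [← Complex.re_sum, ← Finset.sum_mul, ← hS, Complex.mul_conj]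
      rw [Complex.normSq_eq_abs]
      norm_cast
      ring
    have hle : ∀ i ∈ s, (v i * (starRingEnd ℂ) S).re ≤ Complex.abs (v i) * Complex.abs S := by
      intro i hi
      calc (v i * (starRingEnd ℂ) S).re ≤ Complex.abs (v i * (starRingEnd ℂ) S) :=
        Complex.re_le_abs _
        _ = Complex.abs (v i) * Complex.abs S := by simp [map_mul]
    have heq : ∑ i ∈ s, Complex.abs (v i) * Complex.abs S = Complex.abs S * Complex.abs S := by
      rw [← Finset.sum_mul, ← h, mul_comm]
    intro i hi
    by_contra hne
    have : ∑ i ∈ s, (v i * (starRingEnd ℂ) S).re < ∑ i ∈ s, Complex.abs (v i) * Complex.abs S :=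
      Finset.sum_lt_sum hle ⟨i, hi, lt_of_le_of_ne (hle i hi) hne⟩
    rw [hsum, heq] at this
    exact lt_irrefl _ this
  intro i hi
  have h1 : v i * (starRingEnd ℂ) S = ((Complex.abs (v i) * Complex.abs S : ℝ) : ℂ) := by
    have := ds_re_eq_abs_imp (z := v i * (starRingEnd ℂ) S) ?_
    · rw [this]; norm_cast
      rw [map_mul]; simp
    · rw [key i hi]; rw [map_mul]; simp
  have h2 := congrArg (· * S) h1
  rw [mul_assoc, mul_comm ((starRingEnd ℂ) S) S, Complex.mul_conj, Complex.normSq_eq_abs] at h2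
  have habs : (Complex.abs S : ℂ) ≠ 0 := by
    exact Complex.ofReal_ne_zero.2 ((AbsoluteValue.ne_zero_iff _).2 hS0)
  have h3 : v i * (Complex.abs S : ℝ) * (Complex.abs S : ℝ)
      = (Complex.abs (v i) : ℝ) * S * (Complex.abs S : ℝ) := by
    push_cast at h2 ⊢
    have hsq : (Complex.abs S : ℂ) * (Complex.abs S : ℂ) = (Complex.abs S : ℂ) ^ 2 := (sq _).symm
    rw [mul_assoc, hsq, h2]
    ring
  exact mul_right_cancel₀ habs h3

theorem ds_eqall {ι : Type*} (s : Finset ι) (a : ι → ℝ) (c : ℝ)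
    (hle : ∀ i ∈ s, a i ≤ c) (hsum : (s.card : ℝ) * c ≤ ∑ i ∈ s, a i) :
    ∀ i ∈ s, a i = c := by
  intro i hi
  by_contra hne
  have hlt : ∑ j ∈ s, a j < ∑ j ∈ s, c :=
    Finset.sum_lt_sum hle ⟨i, hi, lt_of_le_of_ne (hle i hi) hne⟩
  rw [Finset.sum_const, nsmul_eq_mul] at hlt
  linarith

variable {G : Type*} [AddCommGroup G] [Fintype G]

theorem ds_inversion (f : G → ℂ) (g : G) :
    (Fintype.card G : ℂ) * f g
      = ∑ ξ : AddChar G ℂ, (∑ h : G, f h * (starRingEnd ℂ) (ξ h)) * ξ g := by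
  classical
  have : ∀ ξ : AddChar G ℂ, (∑ h : G, f h * (starRingEnd ℂ) (ξ h)) * ξ g
      = ∑ h : G, f h * ξ (g - h) := by
    intro ξ
    rw [Finset.sum_mul]
    refine Finset.sum_congr rfl fun h _ => ?_
    rw [mul_assoc, ← AddChar.map_neg_eq_conj, ← AddChar.map_add_eq_mul]
    rw [neg_add_eq_sub]
  simp_rw [this]
  rw [Finset.sum_comm]
  have : ∀ h : G, ∑ ξ : AddChar G ℂ, f h * ξ (g - h)
      = f h * (if g - h = 0 then (Fintype.card G : ℂ) else 0) := by
    intro h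
    rw [← Finset.mul_sum, AddChar.sum_apply_eq_ite]
  simp_rw [this, sub_eq_zero, mul_ite, mul_zero]
  simp [eq_comm, mul_comm]

/-- Lift a character trivial on `H` to the quotient. -/
noncomputable def ds_liftChar (H : AddSubgroup G) (ξ : AddChar G ℂ)
    (hξ : ∀ h ∈ H, ξ h = 1) : AddChar (G ⧸ H) ℂ where
  toFun := fun x => Quotient.liftOn' x ξ (by
    intro a b hab
    rw [QuotientAddGroup.leftRel_apply] at hab
    have : ξ b = ξ (a + (-a + b)) := by rw [add_neg_cancel_left]
    rw [this, AddChar.map_add_eq_mul, hξ _ hab, mul_one])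
  map_zero_eq_one' := by
    have : (0 : G ⧸ H) = QuotientAddGroup.mk 0 := rfl
    rw [this]
    exact AddChar.map_zero_eq_one ξ
  map_add_eq_mul' := by
    intro x y
    induction x using QuotientAddGroup.induction_on
    induction y using QuotientAddGroup.induction_on
    show Quotient.liftOn' (QuotientAddGroup.mk _) _ _ = _
    exact AddChar.map_add_eq_mul ξ _ _

theorem ds_card_trivialOn (H : AddSubgroup G) :
    Nat.card {ξ : AddChar G ℂ // ∀ h ∈ H, ξ h = 1} * Nat.card H = Fintype.card G := by
  classical
  have e : AddChar (G ⧸ H) ℂ ≃ {ξ : AddChar G ℂ // ∀ h ∈ H, ξ h = 1} :=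
    { toFun := fun κ => ⟨κ.compAddMonoidHom (QuotientAddGroup.mk' H), by
        intro h hh
        simp [AddChar.compAddMonoidHom_apply, (QuotientAddGroup.eq_zero_iff h).2 hh]⟩
      invFun := fun ξ => ds_liftChar H ξ.1 ξ.2
      left_inv := by
        intro κ
        ext x
        induction x using QuotientAddGroup.induction_on
        rfl
      right_inv := by
        intro ξ
        ext g
        rfl }
  rw [← Nat.card_congr e]
  have h1 : Nat.card (AddChar (G ⧸ H) ℂ) = Nat.card (G ⧸ H) := by
    have : Fintype (G ⧸ H) := Fintype.ofFinite _
    simp [Nat.card_eq_fintype_card, AddChar.card_eq]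
  rw [h1, ← Nat.card_eq_fintype_card,
    AddSubgroup.card_eq_card_quotient_mul_card_addSubgroup H]

theorem ds_backward (f : G → ℂ) (H : AddSubgroup G) (a : G) (χ : AddChar G ℂ) (c : ℂ)
    (hc : c ≠ 0)
    (hfg : ∀ g : G, f g = c * χ g * Set.indicator (a +ᵥ (H : Set G)) (fun _ => (1 : ℂ)) g) :
    Nat.card {g : G // f g ≠ 0} *
      Nat.card {ξ : AddChar G ℂ // (∑ g : G, f g * (starRingEnd ℂ) (ξ g)) ≠ 0} =
      Fintype.card G := by
  classical
  have hchi : ∀ (ψ : AddChar G ℂ) (g : G), ψ g ≠ 0 := by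
    intro ψ g
    have := AddChar.norm_apply (α := ℂ) ψ g
    intro h0
    rw [h0] at this
    simp at this
  have hsupp : ∀ g : G, f g ≠ 0 ↔ g ∈ a +ᵥ (H : Set G) := by
    intro g
    rw [hfg g]
    by_cases hg : g ∈ a +ᵥ (H : Set G)
    · simp [Set.indicator_of_mem hg, hc, hchi χ g, hg]
    · simp [Set.indicator_of_notMem hg, hg]
  have hcard1 : Nat.card {g : G // f g ≠ 0} = Nat.card H := by
    rw [Nat.card_congr (Equiv.subtypeEquivRight hsupp)]
    have e : (H : Set G) ≃ (a +ᵥ (H : Set G) : Set G) :=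
      { toFun := fun x => ⟨a + x, ⟨x, x.2, rfl⟩⟩
        invFun := fun x => ⟨-a + x, by
          obtain ⟨y, hy, hxy⟩ := x.2
          simp only [← hxy]
          simpa using hy⟩
        left_inv := fun x => by simp
        right_inv := fun x => by simp }
    rw [← Nat.card_congr e]
    rfl
  have key : ∀ ξ : AddChar G ℂ,
      (∑ g : G, f g * (starRingEnd ℂ) (ξ g))
        = (c * χ a * (starRingEnd ℂ) (ξ a)) * ∑ h : H, (χ * ξ⁻¹) (h : G) := by
    intro ξ
    have e : Function.Injective (fun h : H => a + (h : G)) := by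
      intro x y hxy
      simp only [add_right_injective a] at hxy
      exact Subtype.ext (by simpa using hxy)
    have himg : ∀ g : G, g ∉ Finset.univ.image (fun h : H => a + (h : G)) →
        f g * (starRingEnd ℂ) (ξ g) = 0 := by
      intro g hg
      have : g ∉ a +ᵥ (H : Set G) := by
        intro ⟨y, hy, hxy⟩
        exact hg (Finset.mem_image.2 ⟨⟨y, hy⟩, Finset.mem_univ _, hxy⟩)
      rw [(not_not.1 (mt (hsupp g).1 (by simpa using this))), zero_mul]
    rw [← Finset.sum_subset (Finset.subset_univ _) (fun g _ hg => himg g hg),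
      Finset.sum_image (fun x _ y _ h => e h)]
    rw [Finset.mul_sum]
    refine Finset.sum_congr rfl fun h _ => ?_
    have hmem : a + (h : G) ∈ a +ᵥ (H : Set G) := ⟨h, h.2, rfl⟩
    rw [hfg (a + h), Set.indicator_of_mem hmem]
    simp only [AddChar.map_add_eq_mul, map_mul, AddChar.mul_apply, AddChar.inv_apply,
      AddChar.map_neg_eq_conj]
    ring
  have hne : ∀ ξ : AddChar G ℂ,
      (∑ g : G, f g * (starRingEnd ℂ) (ξ g)) ≠ 0 ↔ ∀ h ∈ H, (χ * ξ⁻¹) h = 1 := by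
    intro ξ
    rw [key ξ]
    have hK : c * χ a * (starRingEnd ℂ) (ξ a) ≠ 0 := by
      apply mul_ne_zero (mul_ne_zero hc (hchi χ a))
      simpa using hchi ξ a
    rw [mul_ne_zero_iff]
    have hsum : ∑ h : H, (χ * ξ⁻¹) (h : G)
        = ∑ h : H, ((χ * ξ⁻¹).compAddMonoidHom H.subtype) h := rfl
    rw [hsum, AddChar.sum_eq_ite]
    constructor
    · rintro ⟨-, hs⟩ h hh
      by_cases h0 : (χ * ξ⁻¹).compAddMonoidHom H.subtype = 0
      · have := DFunLike.congr_fun h0 ⟨h, hh⟩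
        simpa using this
      · simp [h0] at hs
    · intro hall
      refine ⟨hK, ?_⟩
      have h0 : (χ * ξ⁻¹).compAddMonoidHom H.subtype = 0 := by
        ext ⟨h, hh⟩
        simpa using hall h hh
      simp [h0, Fintype.card_ne_zero]
  have hcard2 : Nat.card {ξ : AddChar G ℂ // (∑ g : G, f g * (starRingEnd ℂ) (ξ g)) ≠ 0}
      = Nat.card {ξ : AddChar G ℂ // ∀ h ∈ H, ξ h = 1} := by
    rw [Nat.card_congr (Equiv.subtypeEquivRight hne)]
    have hinv : ∀ ψ : AddChar G ℂ, χ * (χ * ψ⁻¹)⁻¹ = ψ := by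
      intro ψ
      ext g
      show χ g * ((χ * ψ⁻¹) (-g)) = ψ g
      rw [AddChar.mul_apply, AddChar.inv_apply, neg_neg, ← mul_assoc,
        ← AddChar.map_add_eq_mul, add_neg_cancel, AddChar.map_zero_eq_one, one_mul]
    refine Nat.card_congr
      { toFun := fun ξ => ⟨χ * ξ.1⁻¹, ξ.2⟩
        invFun := fun η => ⟨χ * η.1⁻¹, by rw [hinv]; exact η.2⟩
        left_inv := fun ξ => by ext1; exact hinv ξ.1
        right_inv := fun η => by ext1; exact hinv η.1 }
  rw [hcard1, hcard2, mul_comm, ds_card_trivialOn]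

end Aux

theorem donoho_stark_and_equality_case {G : Type*} [AddCommGroup G] [Fintype G]
    (f : G → ℂ) (hf : f ≠ 0) :
    Fintype.card G ≤
        Nat.card {g : G // f g ≠ 0} *
          Nat.card {ξ : AddChar G ℂ // (∑ g : G, f g * (starRingEnd ℂ) (ξ g)) ≠ 0} ∧
    (Nat.card {g : G // f g ≠ 0} *
          Nat.card {ξ : AddChar G ℂ // (∑ g : G, f g * (starRingEnd ℂ) (ξ g)) ≠ 0} =
        Fintype.card G ↔
      ∃ (H : AddSubgroup G) (g₀ : G) (χ : AddChar G ℂ) (c : ℂ), c ≠ 0 ∧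
        ∀ g : G, f g = c * χ g * Set.indicator (g₀ +ᵥ (H : Set G)) (fun _ => (1 : ℂ)) g) := by

  classical
  have hchi : ∀ (ψ : AddChar G ℂ) (g : G), ψ g ≠ 0 := by
    intro ψ g
    have := AddChar.norm_apply (α := ℂ) ψ g
    intro h0
    rw [h0] at this
    simp at this
  have habs1 : ∀ (ψ : AddChar G ℂ) (g : G), Complex.abs (ψ g) = 1 := by
    intro ψ g
    rw [← Complex.norm_eq_abs]
    exact AddChar.norm_apply ψ g
  set n := Fintype.card G with hn
  set F : AddChar G ℂ → ℂ := fun ξ => ∑ g : G, f g * (starRingEnd ℂ) (ξ g) with hFd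
  set T : Finset G := Finset.univ.filter (fun g => f g ≠ 0) with hTdef
  set Sh : Finset (AddChar G ℂ) := Finset.univ.filter (fun ξ => F ξ ≠ 0) with hShdef
  have hmemT : ∀ g, g ∈ T ↔ f g ≠ 0 := fun g => by simp [hTdef]
  have hmemS : ∀ ξ, ξ ∈ Sh ↔ F ξ ≠ 0 := fun ξ => by simp [hShdef]
  have hcard1 : Nat.card {g : G // f g ≠ 0} = T.card := by
    rw [Nat.card_eq_fintype_card, Fintype.card_subtype]
  have hcard2 : Nat.card {ξ : AddChar G ℂ // (∑ g : G, f g * (starRingEnd ℂ) (ξ g)) ≠ 0}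
      = Sh.card := by
    rw [Nat.card_eq_fintype_card, Fintype.card_subtype]
  rw [hcard1, hcard2]
  -- setup
  have hTne : T.Nonempty := by
    obtain ⟨g, hg⟩ := Function.ne_iff.1 hf
    exact ⟨g, (hmemT g).2 hg⟩
  obtain ⟨g₀, hg₀T, hmax⟩ := T.exists_max_image (fun g => Complex.abs (f g)) hTne
  set M := Complex.abs (f g₀) with hMd
  have hfg₀ : f g₀ ≠ 0 := (hmemT g₀).1 hg₀T
  have hM0 : 0 < M := by
    rw [hMd]
    exact (AbsoluteValue.pos_iff _).2 hfg₀
  set B := ∑ g ∈ T, Complex.abs (f g) with hBd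
  have hFT : ∀ ξ, F ξ = ∑ g ∈ T, f g * (starRingEnd ℂ) (ξ g) := by
    intro ξ
    rw [hFd]
    symm
    apply Finset.sum_subset (Finset.subset_univ T)
    intro g _ hg
    have hg0 : f g = 0 := by
      by_contra h
      exact hg ((hmemT g).2 h)
    rw [hg0, zero_mul]
  have habsterm : ∀ (ξ : AddChar G ℂ) (g : G),
      Complex.abs (f g * (starRingEnd ℂ) (ξ g)) = Complex.abs (f g) := by
    intro ξ g
    rw [map_mul]
    simp [habs1 ξ g]
  have hFB : ∀ ξ, Complex.abs (F ξ) ≤ B := by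
    intro ξ
    rw [hFT ξ, hBd]
    refine le_trans (Complex.abs.sum_le _ _) ?_
    exact le_of_eq (Finset.sum_congr rfl fun g _ => habsterm ξ g)
  have hBM : B ≤ (T.card : ℝ) * M := by
    rw [hBd]
    calc ∑ g ∈ T, Complex.abs (f g) ≤ ∑ _g ∈ T, M := Finset.sum_le_sum (fun g hg => hmax g hg)
      _ = T.card * M := by rw [Finset.sum_const, nsmul_eq_mul]
  have hA : (n : ℝ) * M ≤ ∑ ξ ∈ Sh, Complex.abs (F ξ) := by
    have hres : (n : ℂ) * f g₀ = ∑ ξ ∈ Sh, F ξ * ξ g₀ := by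
      rw [hn, ds_inversion f g₀]
      symm
      apply Finset.sum_subset (Finset.subset_univ _)
      intro ξ _ hξ
      have : F ξ = 0 := by
        by_contra h
        exact hξ ((hmemS ξ).2 h)
      rw [this, zero_mul]
    calc (n : ℝ) * M = Complex.abs ((n : ℂ) * f g₀) := by
          rw [map_mul]
          simp [hMd]
      _ = Complex.abs (∑ ξ ∈ Sh, F ξ * ξ g₀) := by rw [hres]
      _ ≤ ∑ ξ ∈ Sh, Complex.abs (F ξ * ξ g₀) := Complex.abs.sum_le _ _
      _ = ∑ ξ ∈ Sh, Complex.abs (F ξ) := by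
          refine Finset.sum_congr rfl fun ξ _ => ?_
          rw [map_mul]
          simp [habs1 ξ g₀]
  have hsumB : ∑ ξ ∈ Sh, Complex.abs (F ξ) ≤ (Sh.card : ℝ) * B := by
    calc ∑ ξ ∈ Sh, Complex.abs (F ξ) ≤ ∑ _ξ ∈ Sh, B := Finset.sum_le_sum (fun ξ _ => hFB ξ)
      _ = Sh.card * B := by rw [Finset.sum_const, nsmul_eq_mul]
  have hB0 : 0 < B := by
    rw [hBd]
    refine Finset.sum_pos' (fun g _ => AbsoluteValue.nonneg _ _) ⟨g₀, hg₀T, ?_⟩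
    exact (AbsoluteValue.pos_iff _).2 hfg₀
  have hShcard0 : 0 < Sh.card := by
    rcases Nat.eq_zero_or_pos Sh.card with h | h
    · exfalso
      have : Sh = ∅ := Finset.card_eq_zero.1 h
      rw [this] at hA
      simp at hA
      have hn0 : 0 < (n : ℝ) := by
        exact_mod_cast Fintype.card_pos
      nlinarith
    · exact h
  have hineqR : (n : ℝ) * M ≤ ((Sh.card : ℝ) * ((T.card : ℝ) * M)) := by
    refine le_trans hA (le_trans hsumB ?_)
    have := mul_le_mul_of_nonneg_left hBM (by positivity : (0:ℝ) ≤ (Sh.card : ℝ))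
    linarith
  have hineq : n ≤ T.card * Sh.card := by
    have h' : (n : ℝ) ≤ (T.card : ℝ) * (Sh.card : ℝ) := by
      have h2 : (n : ℝ) * M ≤ ((T.card : ℝ) * (Sh.card : ℝ)) * M := by nlinarith
      exact le_of_mul_le_mul_right h2 hM0
    exact_mod_cast h'
  refine ⟨hineq, ?_, ?_⟩
  swap
  · -- backward direction
    rintro ⟨H, a, χ, c, hc, hfg⟩
    have := ds_backward f H a χ c hc hfg
    rw [hcard1, hcard2] at this
    exact this
  -- forward direction
  intro heq
  have hprodR : (T.card : ℝ) * (Sh.card : ℝ) = (n : ℝ) := by exact_mod_cast heq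
  have hBeq : B = (T.card : ℝ) * M := by
    by_contra hne
    have hlt : B < (T.card : ℝ) * M := lt_of_le_of_ne hBM hne
    have hS0 : 0 < (Sh.card : ℝ) := by exact_mod_cast hShcard0
    nlinarith
  have hSB : (Sh.card : ℝ) * B = (n : ℝ) * M := by
    rw [hBeq]
    calc (Sh.card : ℝ) * ((T.card : ℝ) * M) = ((T.card : ℝ) * (Sh.card : ℝ)) * M := by ring
      _ = n * M := by rw [hprodR]
  have hAeq : ∑ ξ ∈ Sh, Complex.abs (F ξ) = (Sh.card : ℝ) * B :=
    le_antisymm hsumB (by rw [hSB]; exact hA)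
  have hfM : ∀ g ∈ T, Complex.abs (f g) = M :=
    ds_eqall T _ M hmax (by rw [← hBd, ← hBeq])
  have hFeq : ∀ ξ ∈ Sh, Complex.abs (F ξ) = B :=
    ds_eqall Sh _ B (fun ξ _ => hFB ξ) (by rw [← hAeq])
  -- alignment
  have halign : ∀ ξ ∈ Sh, ∀ g ∈ T,
      (f g * (starRingEnd ℂ) (ξ g)) * (B : ℂ) = (M : ℂ) * F ξ := by
    intro ξ hξ g hg
    have habs : Complex.abs (∑ g ∈ T, f g * (starRingEnd ℂ) (ξ g))
        = ∑ g ∈ T, Complex.abs (f g * (starRingEnd ℂ) (ξ g)) := by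
      rw [← hFT ξ, hFeq ξ hξ, hBd]
      exact Finset.sum_congr rfl fun g _ => (habsterm ξ g).symm
    have key := ds_align T (fun g => f g * (starRingEnd ℂ) (ξ g)) habs g hg
    rw [← hFT ξ, hFeq ξ hξ, habsterm ξ g, hfM g hg] at key
    exact key
  have hBC0 : (B : ℂ) ≠ 0 := Complex.ofReal_ne_zero.2 (ne_of_gt hB0)
  have hpair : ∀ ξ ∈ Sh, ∀ g ∈ T, ∀ g' ∈ T,
      f g * (starRingEnd ℂ) (ξ g) = f g' * (starRingEnd ℂ) (ξ g') := by
    intro ξ hξ g hg g' hg'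
    exact mul_right_cancel₀ hBC0 ((halign ξ hξ g hg).trans (halign ξ hξ g' hg').symm)
  obtain ⟨ξ₀, hξ₀⟩ := Finset.card_pos.1 hShcard0
  set c := f g₀ * (starRingEnd ℂ) (ξ₀ g₀) with hcd
  have hc0 : c ≠ 0 := by
    apply mul_ne_zero hfg₀
    simpa using hchi ξ₀ g₀
  have hfc : ∀ g ∈ T, f g = c * ξ₀ g := by
    intro g hg
    have h1 := hpair ξ₀ hξ₀ g hg g₀ hg₀T
    have h2 : (starRingEnd ℂ) (ξ₀ g) * ξ₀ g = 1 := by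
      rw [mul_comm, Complex.mul_conj, Complex.normSq_eq_abs, habs1 ξ₀ g]
      norm_num
    calc f g = f g * ((starRingEnd ℂ) (ξ₀ g) * ξ₀ g) := by rw [h2, mul_one]
      _ = (f g * (starRingEnd ℂ) (ξ₀ g)) * ξ₀ g := by ring
      _ = c * ξ₀ g := by rw [h1, ← hcd]
  -- the subgroup
  set L : AddSubgroup G :=
    { carrier := {g | ∀ ξ ∈ Sh, (ξ₀ * ξ⁻¹) g = 1}
      zero_mem' := fun ξ _ => AddChar.map_zero_eq_one _
      add_mem' := by
        intro x y hx hy ξ hξ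
        rw [AddChar.map_add_eq_mul, hx ξ hξ, hy ξ hξ, one_mul]
      neg_mem' := by
        intro x hx ξ hξ
        rw [AddChar.map_neg_eq_inv, hx ξ hξ, inv_one] } with hLd
  have hmemL : ∀ g : G, g ∈ L ↔ ∀ ξ ∈ Sh, (ξ₀ * ξ⁻¹) g = 1 := fun g => Iff.rfl
  have hTL : ∀ g ∈ T, g - g₀ ∈ L := by
    intro g hg
    rw [hmemL]
    intro ξ hξ
    have h1 := hpair ξ hξ g hg g₀ hg₀T
    rw [hfc g hg, hfc g₀ hg₀T] at h1
    have h1' : ξ₀ g * (starRingEnd ℂ) (ξ g) = ξ₀ g₀ * (starRingEnd ℂ) (ξ g₀) :=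
      mul_left_cancel₀ hc0 (by linear_combination h1)
    have hψ : ∀ x : G, (ξ₀ * ξ⁻¹) x = ξ₀ x * (starRingEnd ℂ) (ξ x) := by
      intro x
      rw [AddChar.mul_apply, AddChar.inv_apply, AddChar.map_neg_eq_conj]
    have hval : (ξ₀ * ξ⁻¹) g = (ξ₀ * ξ⁻¹) g₀ := by rw [hψ, hψ, h1']
    have hsplit : (ξ₀ * ξ⁻¹) (g - g₀) * (ξ₀ * ξ⁻¹) g₀ = (ξ₀ * ξ⁻¹) g := by
      rw [← AddChar.map_add_eq_mul, sub_add_cancel]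
    have hg₀ne : (ξ₀ * ξ⁻¹) g₀ ≠ 0 := hchi _ _
    refine mul_right_cancel₀ hg₀ne ?_
    rw [hsplit, hval, one_mul]
  have hST : T.card ≤ Nat.card L := by
    have hinj : Function.Injective
        (fun g : {g // g ∈ T} => (⟨g.1 - g₀, hTL g.1 g.2⟩ : L)) := by
      intro x y hxy
      apply Subtype.ext
      have := congrArg Subtype.val hxy
      simpa [sub_left_inj] using this
    calc T.card = Nat.card {g // g ∈ T} := by
          rw [Nat.card_eq_fintype_card, Fintype.card_coe]
      _ ≤ Nat.card L := Nat.card_le_card_of_injective _ hinj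
  have hSQ : Sh.card ≤ Nat.card {η : AddChar G ℂ // ∀ h ∈ L, η h = 1} := by
    have hinj : Function.Injective
        (fun ξ : {ξ // ξ ∈ Sh} =>
          (⟨ξ₀ * (ξ.1)⁻¹, fun h hh => ((hmemL h).1 hh) ξ.1 ξ.2⟩ :
            {η : AddChar G ℂ // ∀ h ∈ L, η h = 1})) := by
      intro x y hxy
      apply Subtype.ext
      have h1 := congrArg Subtype.val hxy
      simp only at h1
      have := mul_left_cancel h1
      exact inv_injective this
    calc Sh.card = Nat.card {ξ // ξ ∈ Sh} := by
          rw [Nat.card_eq_fintype_card, Fintype.card_coe]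
      _ ≤ _ := Nat.card_le_card_of_injective _ hinj
  have hLcard : Nat.card L = T.card := by
    have h1 : Sh.card * Nat.card L ≤ Fintype.card G := by
      rw [← ds_card_trivialOn L]
      exact Nat.mul_le_mul_right _ hSQ
    rw [← hn, ← heq, mul_comm T.card Sh.card] at h1
    exact le_antisymm (Nat.le_of_mul_le_mul_left h1 hShcard0) hST
  -- the image finset equals L
  set Lfin : Finset G := Finset.univ.filter (fun g => g ∈ L) with hLfind
  have hLfincard : Lfin.card = Nat.card L := by
    rw [Nat.card_eq_fintype_card, Fintype.card_subtype]
  have hsubinj : Function.Injective (fun g : G => g - g₀) := by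
    intro x y h
    simpa [sub_left_inj] using h
  have himage : T.image (fun g => g - g₀) = Lfin := by
    apply Finset.eq_of_subset_of_card_le
    · intro x hx
      obtain ⟨t, ht, rfl⟩ := Finset.mem_image.1 hx
      rw [hLfind]
      simp only [Finset.mem_filter, Finset.mem_univ, true_and]
      exact hTL t ht
    · rw [hLfincard, hLcard, Finset.card_image_of_injective _ hsubinj]
  have hsupp : ∀ g : G, f g ≠ 0 ↔ g ∈ g₀ +ᵥ (L : Set G) := by
    intro g
    constructor
    · intro hg
      exact ⟨g - g₀, hTL g ((hmemT g).2 hg), by simp⟩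
    · rintro ⟨y, hy, hxy⟩
      have hyL : y ∈ Lfin := by
        rw [hLfind]
        simp only [Finset.mem_filter, Finset.mem_univ, true_and]
        exact hy
      rw [← himage] at hyL
      obtain ⟨t, ht, hty⟩ := Finset.mem_image.1 hyL
      have hgt : g = t := by
        have habel : g₀ + (t - g₀) = t := by abel
        rw [← hxy, ← hty]
        exact habel
      rw [hgt]
      exact (hmemT t).1 ht
  refine ⟨L, g₀, ξ₀, c, hc0, ?_⟩
  intro g
  by_cases hg : f g ≠ 0
  · rw [Set.indicator_of_mem ((hsupp g).1 hg), mul_one]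
    exact hfc g ((hmemT g).2 hg)
  · push_neg at hg
    rw [hg, Set.indicator_of_notMem, mul_zero]
    intro hmem
    exact ((hsupp g).2 hmem) hg
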